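/- Let H be an atomic monoid. Then the catenary degree satisfies c(H) ≤ sup{ |x| : (x, y) ∈ A(M_H) }, the supremum of first-coordinate lengths of atoms of the monoid of relations. -/

import Mathlib

open Multiset
open scoped Classical ENNReal

/-- The set of atoms (irreducible elements) of a reduced monoid `M`. -/
abbrev Atom (M : Type) [CancelCommMonoid M] : Type := {u : M // Irreducible u}

/-- The factorization homomorphism `π : Z(H) → H`, where the factorization monoid
`Z(H)` is realized as the free commutative monoid (multiset) over the atoms. -/
def fprod {M : Type} [CancelCommMonoid M] (z : Multiset (Atom M)) : M :=
  (z.map Subtype.val).prod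

/-- The set of factorizations `Z(a)` of `a`. -/
def Zf {M : Type} [CancelCommMonoid M] (a : M) : Set (Multiset (Atom M)) :=
  {z | fprod z = a}

/-- `M` is reduced: the only unit is `1`. -/
def Reduced (M : Type) [CancelCommMonoid M] : Prop := ∀ u : M, IsUnit u → u = 1

/-- `M` is atomic: every non-unit is a product of atoms. -/
def Atomic (M : Type) [CancelCommMonoid M] : Prop :=
  ∀ a : M, ¬ IsUnit a → ∃ z : Multiset (Atom M), fprod z = a

/-- The distance between two factorizations. -/
noncomputable def fdist {M : Type} [CancelCommMonoid M] (z z' : Multiset (Atom M)) : ℕ :=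
  max (card (z - z')) (card (z' - z))

/-- The catenary degree `c(a)`: the least `N` such that any two factorizations of `a`
can be concatenated by an `N`-chain of factorizations of `a`. -/
noncomputable def cat {M : Type} [CancelCommMonoid M] (a : M) : ℕ∞ :=
  sInf {N : ℕ∞ | ∀ z ∈ Zf a, ∀ z' ∈ Zf a,
    Relation.ReflTransGen (fun u v => v ∈ Zf a ∧ (fdist u v : ℕ∞) ≤ N) z z'}

/-- The catenary degree `c(H)`. -/
noncomputable def catH (M : Type) [CancelCommMonoid M] : ℕ∞ := ⨆ a : M, cat a

/-- The `R`-relation on factorizations of `a`: two factorizations are `R`-related if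
they can be joined by a chain of factorizations of `a` whose consecutive members have a
common atom (the degenerate case `z = z' = 1` is the reflexivity case). -/
def RRel {M : Type} [CancelCommMonoid M] (a : M) :
    Multiset (Atom M) → Multiset (Atom M) → Prop :=
  Relation.ReflTransGen (fun u v => u ∈ Zf a ∧ v ∈ Zf a ∧ u ∩ v ≠ 0)

/-- `|R_a| ≥ 2`: `a` has at least two `R`-equivalence classes of factorizations. -/
def TwoClasses {M : Type} [CancelCommMonoid M] (a : M) : Prop :=
  ∃ z ∈ Zf a, ∃ z' ∈ Zf a, ¬ RRel a z z'

/-- `μ(a)`: the supremum over the `R`-classes `ρ` of `Z(a)` of `min {|z| : z ∈ ρ}`. -/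
noncomputable def mu {M : Type} [CancelCommMonoid M] (a : M) : ℕ∞ :=
  ⨆ z ∈ Zf a, ⨅ w ∈ {w | w ∈ Zf a ∧ RRel a z w}, (card w : ℕ∞)

/-- `μ(H) = sup {μ(a) : a ∈ H, |R_a| ≥ 2}`. -/
noncomputable def muH (M : Type) [CancelCommMonoid M] : ℕ∞ :=
  ⨆ a : M, ⨆ (_ : TwoClasses a), mu a

/-- The monoid of relations `M_H ⊆ Z(H) × Z(H)`. -/
def MHset (M : Type) [CancelCommMonoid M] :
    Set (Multiset (Atom M) × Multiset (Atom M)) :=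
  {p | fprod p.1 = fprod p.2}

/-- Atoms of the (reduced) monoid of relations `M_H`. -/
def IsRelAtom {M : Type} [CancelCommMonoid M]
    (p : Multiset (Atom M) × Multiset (Atom M)) : Prop :=
  p ∈ MHset M ∧ p ≠ 0 ∧
    ∀ q r, q ∈ MHset M → r ∈ MHset M → p = q + r → q = 0 ∨ r = 0

lemma fprod_add {M : Type} [CancelCommMonoid M] (x y : Multiset (Atom M)) :
    fprod (x + y) = fprod x * fprod y := by
  simp [fprod]

/-- Swapping a relation atom gives a relation atom. -/
lemma isRelAtom_swap {M : Type} [CancelCommMonoid M]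
    {p : Multiset (Atom M) × Multiset (Atom M)} (hp : IsRelAtom p) :
    IsRelAtom (p.2, p.1) := by
  obtain ⟨h1, h2, h3⟩ := hp
  refine ⟨h1.symm, ?_, ?_⟩
  · intro h
    apply h2
    have := congrArg Prod.fst h
    have := congrArg Prod.snd h
    ext <;> simp_all [Prod.ext_iff]
  · intro q r hq hr heq
    have := h3 (q.2, q.1) (r.2, r.1) hq.symm hr.symm (by
      have h1' := congrArg Prod.fst heq
      have h2' := congrArg Prod.snd heq
      simp at h1' h2'
      ext <;> simp_all)
    rcases this with h | h
    · left
      have a1 := congrArg Prod.fst h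
      have a2 := congrArg Prod.snd h
      simp at a1 a2
      ext <;> simp_all
    · right
      have a1 := congrArg Prod.fst h
      have a2 := congrArg Prod.snd h
      simp at a1 a2
      ext <;> simp_all

/-- Decomposition of a relation into a list of relation atoms. -/
lemma relAtom_decomp {M : Type} [CancelCommMonoid M] :
    ∀ (n : ℕ) (p : Multiset (Atom M) × Multiset (Atom M)),
      card p.1 + card p.2 ≤ n → p ∈ MHset M →
      ∃ L : List (Multiset (Atom M) × Multiset (Atom M)),
        (∀ q ∈ L, IsRelAtom q) ∧ (L.map Prod.fst).sum = p.1 ∧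
          (L.map Prod.snd).sum = p.2 := by
  intro n
  induction n using Nat.strong_induction_on with
  | _ n IH =>
    intro p hcard hp
    by_cases hz : p = 0
    · exact ⟨[], by simp, by simp [hz], by simp [hz]⟩
    by_cases hatom : IsRelAtom p
    · exact ⟨[p], by simpa using hatom, by simp, by simp⟩
    have : ∃ q r, q ∈ MHset M ∧ r ∈ MHset M ∧ p = q + r ∧ q ≠ 0 ∧ r ≠ 0 := by
      by_contra hcon
      push_neg at hcon
      exact hatom ⟨hp, hz, fun q r hq hr heq => by
        by_contra h
        push_neg at h
        exact h.2 (hcon q r hq hr heq h.1)⟩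
    obtain ⟨q, r, hq, hr, heq, hq0, hr0⟩ := this
    have hcard_pos : ∀ s : Multiset (Atom M) × Multiset (Atom M), s ≠ 0 →
        1 ≤ card s.1 + card s.2 := by
      intro s hs
      by_contra h
      push_neg at h
      interval_cases h' : (card s.1 + card s.2)
      · apply hs
        have h1 : card s.1 = 0 := by omega
        have h2 : card s.2 = 0 := by omega
        ext <;> simp_all [Multiset.card_eq_zero]
    have hsum : card p.1 + card p.2 = (card q.1 + card q.2) + (card r.1 + card r.2) := by
      rw [heq]
      simp [Prod.fst_add, Prod.snd_add, Multiset.card_add]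
      ring
    have hq1 := hcard_pos q hq0
    have hr1 := hcard_pos r hr0
    have hn : 1 ≤ n := by omega
    obtain ⟨Lq, hLq, hLq1, hLq2⟩ := IH (n - 1) (by omega) q (by omega) hq
    obtain ⟨Lr, hLr, hLr1, hLr2⟩ := IH (n - 1) (by omega) r (by omega) hr
    refine ⟨Lq ++ Lr, ?_, ?_, ?_⟩
    · intro x hx
      rcases List.mem_append.mp hx with h | h
      exacts [hLq x h, hLr x h]
    · simp [heq, hLq1, hLr1]
    · simp [heq, hLq2, hLr2]

/-- The chain lemma: replacing the first coordinates of the atoms one at a time. -/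
lemma chain_of_list {M : Type} [CancelCommMonoid M] (S : ℕ∞)
    (L : List (Multiset (Atom M) × Multiset (Atom M)))
    (hL : ∀ q ∈ L, fprod q.1 = fprod q.2 ∧ (card q.1 : ℕ∞) ≤ S ∧ (card q.2 : ℕ∞) ≤ S) :
    ∀ (w : Multiset (Atom M)) (a : M), fprod ((L.map Prod.fst).sum + w) = a →
      Relation.ReflTransGen (fun u v => v ∈ Zf a ∧ (fdist u v : ℕ∞) ≤ S)
        ((L.map Prod.fst).sum + w) ((L.map Prod.snd).sum + w) := by
  induction L with
  | nil => intro w a ha; simpa using Relation.ReflTransGen.refl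
  | cons q T IHT =>
    intro w a ha
    obtain ⟨hq, hq1, hq2⟩ := hL q (by simp)
    simp only [List.map_cons, List.sum_cons] at ha ⊢
    set b := (T.map Prod.fst).sum with hb
    set c := (T.map Prod.snd).sum with hc
    have ha' : fprod q.1 * (fprod b * fprod w) = a := by
      rw [← ha]; simp [fprod_add, mul_assoc]
    have hstep : Relation.ReflTransGen (fun u v => v ∈ Zf a ∧ (fdist u v : ℕ∞) ≤ S)
        (q.1 + (b + w)) (q.2 + (b + w)) := by
      refine Relation.ReflTransGen.single ⟨?_, ?_⟩
      · show fprod _ = a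
        rw [← ha']
        simp [fprod_add, ← hq]
      · have h1 : (q.1 + (b + w)) - (q.2 + (b + w)) = q.1 - q.2 := by
          rw [add_comm q.1, add_comm q.2, add_tsub_add_eq_tsub_left]
        have h2 : (q.2 + (b + w)) - (q.1 + (b + w)) = q.2 - q.1 := by
          rw [add_comm q.1, add_comm q.2, add_tsub_add_eq_tsub_left]
        have d1 : (card (q.1 - q.2) : ℕ∞) ≤ S :=
          le_trans (by exact_mod_cast Multiset.card_le_card (tsub_le_self)) hq1
        have d2 : (card (q.2 - q.1) : ℕ∞) ≤ S :=
          le_trans (by exact_mod_cast Multiset.card_le_card (tsub_le_self)) hq2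
        unfold fdist
        rw [h1, h2]
        push_cast
        exact max_le d1 d2
    have htail := IHT (fun x hx => hL x (by simp [hx])) (q.2 + w) a (by
      rw [← ha']
      simp [fprod_add, ← hq, mul_comm, mul_left_comm, mul_assoc])
    have e1 : b + (q.2 + w) = q.2 + (b + w) := by abel
    have e2 : c + (q.2 + w) = q.2 + c + w := by abel
    rw [e1, e2] at htail
    have estart : q.1 + b + w = q.1 + (b + w) := by abel
    have eend : q.2 + c + w = q.2 + c + w := rfl
    rw [estart]
    exact hstep.trans htail

/-- **Proposition 4.5.1.** `c(H) ≤ sup {|x| : (x, y) ∈ A(M_H)}`. -/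
theorem cat_le_sup_relAtom (M : Type) [CancelCommMonoid M]
    (hred : Reduced M) (hat : Atomic M) :
    catH M ≤ ⨆ p : Multiset (Atom M) × Multiset (Atom M),
      ⨆ (_ : IsRelAtom p), (card p.1 : ℕ∞) := by
  set S : ℕ∞ := ⨆ p : Multiset (Atom M) × Multiset (Atom M),
      ⨆ (_ : IsRelAtom p), (card p.1 : ℕ∞) with hS
  have hbound : ∀ p : Multiset (Atom M) × Multiset (Atom M), IsRelAtom p →
      (card p.1 : ℕ∞) ≤ S ∧ (card p.2 : ℕ∞) ≤ S := by
    intro p hp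
    constructor
    · exact le_iSup_of_le p (le_iSup_of_le hp le_rfl)
    · exact le_iSup_of_le (p.2, p.1) (le_iSup_of_le (isRelAtom_swap hp) le_rfl)
  rw [catH]
  refine iSup_le fun a => ?_
  refine sInf_le ?_
  intro z hz z' hz'
  have hmem : (z, z') ∈ MHset M := by
    show fprod z = fprod z'
    rw [hz, hz']
  obtain ⟨L, hL, hL1, hL2⟩ := relAtom_decomp (card z + card z') (z, z') le_rfl hmem
  have := chain_of_list S L (fun q hq =>
    ⟨(hL q hq).1, (hbound q (hL q hq)).1, (hbound q (hL q hq)).2⟩) 0 a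
    (by have hz2 : fprod z = a := hz; simpa [hL1] using hz2)
  simpa [hL1, hL2] using this
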